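/- For every binary word w there exists a unique binary word w' of the same length such that for all 0 ≤ k ≤ |w|, F_a(w,k) = F_a(w',k) = P_a(w',k), where P_a(w',k) is the number of a's in the prefix of w' of length k. This word w' is called the prefix normal form of w (with respect to a). -/

import Mathlib

/- Binary words are `List Bool`, with letter `a = false` and `b = true`
   (so that `a < b` in the `Bool` order). -/

/-- number of `a`'s in the prefix of length `k` -/
def Pa (w : List Bool) (k : ℕ) : ℕ := (w.take k).count false

/-- number of `b`'s in the prefix of length `k` -/
def Pb (w : List Bool) (k : ℕ) : ℕ := (w.take k).count true

/-- maximum number of `a`'s in a factor of `w` of length `k` -/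
noncomputable def Fa (w : List Bool) (k : ℕ) : ℕ :=
  sSup {n | ∃ v : List Bool, v <:+: w ∧ v.length = k ∧ v.count false = n}

/-- maximum number of `b`'s in a factor of `w` of length `k` -/
noncomputable def Fb (w : List Bool) (k : ℕ) : ℕ :=
  sSup {n | ∃ v : List Bool, v <:+: w ∧ v.length = k ∧ v.count true = n}

/-- minimum number of `a`'s in a factor of `w` of length `k` -/
noncomputable def fa (w : List Bool) (k : ℕ) : ℕ :=
  sInf {n | ∃ v : List Bool, v <:+: w ∧ v.length = k ∧ v.count false = n}

/-- `w` is prefix normal w.r.t. `a`: no factor has more `a`'s than the prefix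
    of the same length -/
def PrefixNormal (w : List Bool) : Prop :=
  ∀ v : List Bool, v <:+: w → v.count false ≤ Pa w v.length

/-- position of the `i`-th `a` in `w` -/
noncomputable def posA (w : List Bool) (i : ℕ) : ℕ := sInf {k | Pa w k = i}

/-- `u` is the prefix normal form of `w` w.r.t. `a` -/
def IsPNFa (w u : List Bool) : Prop :=
  u.length = w.length ∧ ∀ k ≤ w.length, Pa u k = Fa w k ∧ Fa u k = Fa w k

/-- `u` is the prefix normal form of `w` w.r.t. `b` -/
def IsPNFb (w u : List Bool) : Prop :=
  u.length = w.length ∧ ∀ k ≤ w.length, Pb u k = Fb w k ∧ Fb u k = Fb w k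

/-- the Parikh set of `w`: Parikh vectors `(|v|_a, |v|_b)` of factors of `w` -/
def ParikhSet (w : List Bool) : Set (ℕ × ℕ) :=
  {p | ∃ v : List Bool, v <:+: w ∧ p = (v.count false, v.count true)}

/-- Lyndon word: strictly lexicographically smaller than each proper nonempty suffix -/
def IsLyndon (w : List Bool) : Prop :=
  w ≠ [] ∧ ∀ v : List Bool, v <:+ w → v ≠ [] → v ≠ w → List.Lex (· < ·) w v

/-- pre-necklace: a power of the letter `b`, or a prefix of a Lyndon word -/
def PreNecklace (w : List Bool) : Prop :=
  (∃ n, w = List.replicate n true) ∨ ∃ v, IsLyndon v ∧ w <+: v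

section Aux

lemma bddS (w : List Bool) (k : ℕ) :
    BddAbove {n | ∃ v : List Bool, v <:+: w ∧ v.length = k ∧ v.count false = n} := by
  refine ⟨k, fun n hn => ?_⟩
  obtain ⟨v, _, hl, hc⟩ := hn
  calc n = v.count false := hc.symm
  _ ≤ v.length := List.count_le_length
  _ = k := hl

lemma count_le_Fa {w v : List Bool} (h : v <:+: w) : v.count false ≤ Fa w v.length :=
  le_csSup (bddS w v.length) ⟨v, h, rfl, rfl⟩

lemma Fa_mem {w : List Bool} {k : ℕ} (hk : k ≤ w.length) :
    ∃ v : List Bool, v <:+: w ∧ v.length = k ∧ v.count false = Fa w k := by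
  have hne : {n | ∃ v : List Bool, v <:+: w ∧ v.length = k ∧ v.count false = n}.Nonempty :=
    ⟨(w.take k).count false, w.take k, (List.take_prefix k w).isInfix,
      by simp [hk], rfl⟩
  exact Nat.sSup_mem hne (bddS w k)

lemma Fa_zero (w : List Bool) : Fa w 0 = 0 := by
  obtain ⟨v, _, hl, hc⟩ := Fa_mem (w := w) (Nat.zero_le _)
  rw [← hc, List.length_eq_zero_iff.mp hl]
  rfl

lemma Fa_le {w : List Bool} {k : ℕ} (hk : k ≤ w.length) : Fa w k ≤ k := by
  obtain ⟨v, _, hl, hc⟩ := Fa_mem hk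
  rw [← hc, ← hl]
  exact List.count_le_length

lemma Fa_add_le {w : List Bool} {i k : ℕ} (h : i + k ≤ w.length) :
    Fa w (i + k) ≤ Fa w i + Fa w k := by
  obtain ⟨v, hv, hl, hc⟩ := Fa_mem h
  have hsplit : v.count false = (v.take i).count false + (v.drop i).count false := by
    conv_lhs => rw [← List.take_append_drop i v]
    rw [List.count_append]
  have h1 : (v.take i).count false ≤ Fa w i := by
    have := count_le_Fa ((v.take_prefix i).isInfix.trans hv)
    rwa [List.length_take, hl, min_eq_left (Nat.le_add_right i k)] at this
  have h2 : (v.drop i).count false ≤ Fa w k := by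
    have := count_le_Fa ((v.drop_suffix i).isInfix.trans hv)
    rwa [List.length_drop, hl, Nat.add_sub_cancel_left] at this
  omega

lemma Fa_succ_le {w : List Bool} {k : ℕ} (h : k + 1 ≤ w.length) :
    Fa w (k + 1) ≤ Fa w k + 1 := by
  have := Fa_add_le (w := w) (i := k) (k := 1) h
  have h1 : Fa w 1 ≤ 1 := Fa_le (by omega)
  omega

lemma Fa_le_succ {w : List Bool} {k : ℕ} (h : k + 1 ≤ w.length) :
    Fa w k ≤ Fa w (k + 1) := by
  obtain ⟨v, hv, hl, hc⟩ := Fa_mem (w := w) (k := k) (by omega)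
  obtain ⟨s, t, hst⟩ := hv
  rcases t with _ | ⟨c, t⟩
  · rcases s.eq_nil_or_concat with rfl | ⟨s', c, rfl⟩
    · simp at hst
      subst hst
      omega
    · have hinf : (c :: v) <:+: w := ⟨s', [], by simpa [List.concat_eq_append] using hst⟩
      have := count_le_Fa hinf
      have hlen : (c :: v).length = k + 1 := by simp [hl]
      rw [hlen] at this
      have hcnt : v.count false ≤ (c :: v).count false := by
        cases c <;> simp [List.count_cons]
      omega
  · have hinf : (v ++ [c]) <:+: w := ⟨s, t, by simpa using hst⟩
    have := count_le_Fa hinf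
    have hlen : (v ++ [c]).length = k + 1 := by simp [hl]
    rw [hlen] at this
    have hcnt : v.count false ≤ (v ++ [c]).count false := by
      rw [List.count_append]; omega
    omega

lemma Pa_succ {u : List Bool} {k : ℕ} (h : k < u.length) :
    Pa u (k + 1) = Pa u k + if u[k] = false then 1 else 0 := by
  unfold Pa
  rw [List.take_succ, List.getElem?_eq_getElem h, List.count_append]
  cases hu : u[k] <;> simp

lemma Pa_ext {u v : List Bool} (hl : u.length = v.length)
    (h : ∀ k ≤ u.length, Pa u k = Pa v k) : u = v := by
  apply List.ext_getElem hl
  intro i h1 h2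
  have hu := Pa_succ h1
  have hv := Pa_succ h2
  have e1 := h i (by omega)
  have e2 := h (i + 1) (by omega)
  cases hui : u[i] <;> cases hvi : v[i] <;> simp_all

/-- the prefix normal form of `w` -/
noncomputable def pnf (w : List Bool) : List Bool :=
  (List.range w.length).map fun k => decide (Fa w (k + 1) = Fa w k)

lemma pnf_length (w : List Bool) : (pnf w).length = w.length := by
  simp [pnf]

lemma Pa_pnf {w : List Bool} {k : ℕ} (hk : k ≤ w.length) : Pa (pnf w) k = Fa w k := by
  induction k with
  | zero => simp [Pa, Fa_zero]
  | succ k ih =>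
    have hk' : k < (pnf w).length := by rw [pnf_length]; omega
    rw [Pa_succ hk', ih (by omega)]
    have hget : (pnf w)[k] = decide (Fa w (k + 1) = Fa w k) := by
      simp [pnf]
    have h1 : Fa w (k + 1) ≤ Fa w k + 1 := Fa_succ_le hk
    have h2 : Fa w k ≤ Fa w (k + 1) := Fa_le_succ hk
    by_cases he : Fa w (k + 1) = Fa w k
    · rw [hget]; simp [he]
    · rw [hget]; simp [he]; omega

lemma Fa_pnf {w : List Bool} {k : ℕ} (hk : k ≤ w.length) : Fa (pnf w) k = Fa w k := by
  apply le_antisymm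
  · obtain ⟨v, hv, hl, hc⟩ := Fa_mem (w := pnf w) (k := k) (by rw [pnf_length]; exact hk)
    obtain ⟨s, t, hst⟩ := hv
    have hlen : s.length + k + t.length = w.length := by
      have := congrArg List.length hst
      simp [pnf_length, hl] at this
      omega
    have hPi : Pa (pnf w) s.length = s.count false := by
      unfold Pa
      rw [← hst, List.append_assoc, List.take_left]
    have hPik : Pa (pnf w) (s.length + k) = s.count false + v.count false := by
      unfold Pa
      rw [← hst, List.append_assoc, ← hl, List.take_append, List.take_of_length_le (by omega),
        Nat.add_sub_cancel_left, List.take_left, List.count_append]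
    rw [Pa_pnf (by omega)] at hPi
    rw [Pa_pnf (by omega)] at hPik
    have hsub : Fa w (s.length + k) ≤ Fa w s.length + Fa w k := Fa_add_le (by omega)
    omega
  · have : Pa (pnf w) k ≤ Fa (pnf w) k := by
      have := count_le_Fa (w := pnf w) (v := (pnf w).take k) (List.take_prefix k _).isInfix
      rwa [List.length_take, min_eq_left (by rw [pnf_length]; exact hk)] at this
    rw [Pa_pnf hk] at this
    exact this

end Aux

theorem stmt2 (w : List Bool) :
    ∃! w' : List Bool, w'.length = w.length ∧
      ∀ k ≤ w.length, Fa w k = Fa w' k ∧ Fa w' k = Pa w' k := by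
  refine ⟨pnf w, ⟨pnf_length w, fun k hk => ⟨(Fa_pnf hk).symm, by rw [Fa_pnf hk, Pa_pnf hk]⟩⟩, ?_⟩
  rintro u ⟨hlen, hu⟩
  apply Pa_ext (by rw [hlen, pnf_length])
  intro k hk
  rw [hlen] at hk
  obtain ⟨h1, h2⟩ := hu k hk
  rw [Pa_pnf hk, ← h2, ← h1]
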